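/- Let S be a monoid with identity λ generated by the image of a map ι : X → S, and for x ∈ X let Γ_x be the subgraph of Cay(S,X) with vertex set {λ, ι(x)} and the single edge (λ, x, ι(x)). Then M(S,X) is generated as a (·,⁺)-algebra by the set {(Γ_x, ι(x)) : x ∈ X}, i.e. the least subset of M(S,X) containing these elements and closed under multiplication and ⁺ is all of M(S,X); and M^λ(S,X) is generated by these elements together with the identity element (Γ_λ, λ). -/
import Mathlib


/-- A (pre)subgraph of the Cayley graph `Cay(S,X)`: a set of vertices (elements
of `S`) and a set of edges; the edge `(s, x)` has source `s`, label `x` and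
target `s * ι x`. -/
structure PreGraph (S X : Type*) where
  verts : Set S
  edges : Set (S × X)

/-- One step along an edge of `G`. -/
def PreGraph.step {S X : Type*} [Mul S] (ι : X → S) (G : PreGraph S X)
    (a b : S) : Prop :=
  ∃ x, (a, x) ∈ G.edges ∧ b = a * ι x

/-- `G` is a finite accessible subgraph of `Cay(S,X)`: it is finite, the
endpoints of every edge are vertices, `1 ∈ V(G)` and every vertex is reachable
from `1` by a directed path. -/
def IsAccessible {S X : Type*} [Monoid S] (ι : X → S) (G : PreGraph S X) : Prop :=
  G.verts.Finite ∧ G.edges.Finite ∧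
  (∀ e ∈ G.edges, e.1 ∈ G.verts ∧ e.1 * ι e.2 ∈ G.verts) ∧
  (1 : S) ∈ G.verts ∧
  ∀ v ∈ G.verts, Relation.ReflTransGen (PreGraph.step ι G) 1 v

/-- The translate `sG` of a subgraph. -/
def PreGraph.trans {S X : Type*} [Mul S] (s : S) (G : PreGraph S X) :
    PreGraph S X :=
  ⟨(s * ·) '' G.verts, (fun e => (s * e.1, e.2)) '' G.edges⟩

/-- Union of subgraphs. -/
def PreGraph.union {S X : Type*} (A B : PreGraph S X) : PreGraph S X :=
  ⟨A.verts ∪ B.verts, A.edges ∪ B.edges⟩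

/-- Multiplication of the Gould expansion: `(A,s)(B,t) = (A ∪ sB, st)`. -/
def gmul {S X : Type*} [Mul S] (p q : PreGraph S X × S) : PreGraph S X × S :=
  (p.1.union (PreGraph.trans p.2 q.1), p.2 * q.2)

/-- The unary operation of the Gould expansion: `(A,s)⁺ = (A,1)`. -/
def gplus {S X : Type*} [One S] (p : PreGraph S X × S) : PreGraph S X × S :=
  (p.1, 1)

/-- The graph `Γ_λ` with single vertex `1` and no edges. -/
def lambdaGraph (S X : Type*) [One S] : PreGraph S X := ⟨{1}, ∅⟩

/-- The underlying set of the Gould expansion `M^λ(S,X)`. -/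
def Mlam {S X : Type*} [Monoid S] (ι : X → S) : Set (PreGraph S X × S) :=
  {p | IsAccessible ι p.1 ∧ p.2 ∈ p.1.verts}

/-- The underlying set of `M(S,X) = M^λ(S,X) \ {(Γ_λ, λ)}`. -/
def MSem {S X : Type*} [Monoid S] (ι : X → S) : Set (PreGraph S X × S) :=
  Mlam ι \ {(lambdaGraph S X, 1)}


/-- The generator `(Γ_x, ι x)` of the Gould expansion. -/
def genElt {S X : Type*} [Monoid S] (ι : X → S) (x : X) : PreGraph S X × S :=
  (⟨{1, ι x}, {((1 : S), x)}⟩, ι x)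

lemma PreGraph.trans_one {S X : Type*} [Monoid S] (G : PreGraph S X) :
    PreGraph.trans (1 : S) G = G := by
  cases G with
  | mk V E =>
    unfold PreGraph.trans
    congr 1
    · ext v; simp
    · ext e; simp

lemma MSem_key {S X : Type*} [Monoid S] (ι : X → S)
    (T : Set (PreGraph S X × S))
    (hg : ∀ x, genElt ι x ∈ T)
    (hm : ∀ p ∈ T, ∀ q ∈ T, gmul p q ∈ T)
    (hp : ∀ p ∈ T, gplus p ∈ T) :
    MSem ι ⊆ T := by
  classical
  rintro ⟨Γ, s⟩ ⟨⟨⟨hVfin, hEfin, hends, h1, hacc⟩, hs⟩, hne⟩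
  simp only [Set.mem_singleton_iff, Prod.mk.injEq, not_and] at hne
  -- P1 : path elements ending in an edge
  have P1 : ∀ u : S, Relation.ReflTransGen (PreGraph.step ι Γ) 1 u →
      ∀ x : X, (u, x) ∈ Γ.edges →
      ∃ A : PreGraph S X, (A, u * ι x) ∈ T ∧ A.verts ⊆ Γ.verts ∧
        A.edges ⊆ Γ.edges ∧ (1 : S) ∈ A.verts ∧ u * ι x ∈ A.verts ∧
        (u, x) ∈ A.edges := by
    intro u hu
    induction hu with
    | refl =>
      intro x hx
      refine ⟨(genElt ι x).1, ?_, ?_, ?_, ?_, ?_, ?_⟩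
      · rw [one_mul]; exact hg x
      · intro v hv
        rcases hv with hv | hv
        · simp only [hv]; exact (hends _ hx).1
        · simp only [Set.mem_singleton_iff] at hv
          have := (hends _ hx).2
          rw [one_mul] at this
          simpa [genElt, hv] using this
      · intro e he
        simp only [genElt, Set.mem_singleton_iff] at he
        simpa [he] using hx
      · exact Set.mem_insert _ _
      · rw [one_mul]; exact Set.mem_insert_of_mem _ rfl
      · exact rfl
    | @tail b c hb hstep ih =>
      obtain ⟨y, hy, rfl⟩ := hstep
      intro x hx
      obtain ⟨A, hAT, hAV, hAE, hA1, hAc, hAe⟩ := ih y hy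
      set c := b * ι y with hc
      refine ⟨(gmul (A, c) (genElt ι x)).1, ?_, ?_, ?_, ?_, ?_, ?_⟩
      · exact hm _ hAT _ (hg x)
      · intro v hv
        simp only [gmul, genElt, PreGraph.union, PreGraph.trans,
          Set.mem_union, Set.image_insert_eq, Set.image_singleton,
          mul_one, Set.mem_insert_iff, Set.mem_singleton_iff] at hv
        rcases hv with hv | hv | hv
        · exact hAV hv
        · rw [hv]; exact (hends _ hx).1
        · rw [hv]; exact (hends _ hx).2
      · intro e he
        simp only [gmul, genElt, PreGraph.union, PreGraph.trans,
          Set.mem_union, Set.image_singleton, mul_one,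
          Set.mem_singleton_iff] at he
        rcases he with he | he
        · exact hAE he
        · rw [he]; exact hx
      · exact Set.mem_union_left _ hA1
      · refine Set.mem_union_right _ ?_
        simp only [genElt, PreGraph.trans, Set.image_insert_eq,
          Set.image_singleton, mul_one]
        exact Set.mem_insert_of_mem _ rfl
      · refine Set.mem_union_right _ ?_
        simp only [genElt, PreGraph.trans, Set.image_singleton, mul_one]
        exact rfl
  -- P2 : plus of path elements
  have P2 : ∀ e ∈ Γ.edges,
      ∃ A : PreGraph S X, (A, (1 : S)) ∈ T ∧ A.verts ⊆ Γ.verts ∧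
        A.edges ⊆ Γ.edges ∧ (1 : S) ∈ A.verts ∧ e.1 * ι e.2 ∈ A.verts ∧
        e ∈ A.edges := by
    intro e he
    obtain ⟨A, hAT, hAV, hAE, hA1, hAc, hAe⟩ :=
      P1 e.1 (hacc e.1 (hends e he).1) e.2 (by simpa using he)
    exact ⟨A, hp _ hAT, hAV, hAE, hA1, hAc, by simpa using hAe⟩
  -- P3 : combining over a finite nonempty set of edges
  have P3 : ∀ F : Finset (S × X), ↑F ⊆ Γ.edges → F.Nonempty →
      ∃ A : PreGraph S X, (A, (1 : S)) ∈ T ∧ A.verts ⊆ Γ.verts ∧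
        A.edges ⊆ Γ.edges ∧ (1 : S) ∈ A.verts ∧
        ∀ e ∈ F, e ∈ A.edges ∧ e.1 * ι e.2 ∈ A.verts := by
    intro F
    induction F using Finset.induction_on with
    | empty => intro _ h; exact absurd h (by simp)
    | @insert a F' ha ih =>
      intro hsub _
      have ha' : a ∈ Γ.edges := hsub (Finset.mem_insert_self a F')
      obtain ⟨A, hAT, hAV, hAE, hA1, hAc, hAe⟩ := P2 a ha'
      rcases F'.eq_empty_or_nonempty with hF' | hF'
      · subst hF'
        refine ⟨A, hAT, hAV, hAE, hA1, ?_⟩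
        intro e he
        simp only [Finset.mem_insert, Finset.notMem_empty, or_false] at he
        subst he
        exact ⟨hAe, hAc⟩
      · obtain ⟨B, hBT, hBV, hBE, hB1, hBall⟩ :=
          ih (fun e he => hsub (Finset.mem_insert_of_mem he)) hF'
        have hmem : (A.union B, (1 : S)) ∈ T := by
          have := hm _ hAT _ hBT
          simpa [gmul, PreGraph.trans_one] using this
        refine ⟨A.union B, hmem, ?_, ?_, Set.mem_union_left _ hA1, ?_⟩
        · exact Set.union_subset hAV hBV
        · exact Set.union_subset hAE hBE
        · intro e he
          rcases Finset.mem_insert.mp he with he | he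
          · subst he
            exact ⟨Set.mem_union_left _ hAe, Set.mem_union_left _ hAc⟩
          · exact ⟨Set.mem_union_right _ (hBall e he).1,
              Set.mem_union_right _ (hBall e he).2⟩
  -- the graph has at least one edge
  have hEne : Γ.edges.Nonempty := by
    rw [Set.nonempty_iff_ne_empty]
    intro hE
    have hv1 : ∀ v ∈ Γ.verts, v = 1 := by
      intro v hv
      rcases (hacc v hv).cases_tail with h | ⟨c, _, hcv⟩
      · exact h
      · obtain ⟨y, hy, _⟩ := hcv
        rw [hE] at hy
        exact absurd hy (Set.notMem_empty _)
    have hΓ : Γ = lambdaGraph S X := by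
      cases Γ with
      | mk V E =>
        simp only [lambdaGraph, PreGraph.mk.injEq]
        constructor
        · apply Set.Subset.antisymm
          · intro v hv; exact hv1 v hv
          · intro v hv
            simp only [Set.mem_singleton_iff] at hv
            rw [hv]; exact h1
        · exact hE
    exact hne hΓ (hv1 s hs)
  -- combine everything
  obtain ⟨A, hAT, hAV, hAE, hA1, hAall⟩ :=
    P3 hEfin.toFinset (by simp) (by simpa [Set.Finite.toFinset_nonempty] using hEne)
  have hAall' : ∀ e ∈ Γ.edges, e ∈ A.edges ∧ e.1 * ι e.2 ∈ A.verts := by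
    intro e he
    exact hAall e (hEfin.mem_toFinset.mpr he)
  have hedges : A.edges = Γ.edges :=
    Set.Subset.antisymm hAE (fun e he => (hAall' e he).1)
  rcases (hacc s hs).cases_tail with h | ⟨w, hw, hws⟩
  · -- s = 1 : the element is (A, 1)
    have hverts : A.verts = Γ.verts := by
      apply Set.Subset.antisymm hAV
      intro v hv
      rcases (hacc v hv).cases_tail with h' | ⟨c, _, hcv⟩
      · rw [h']; exact hA1
      · obtain ⟨y, hy, rfl⟩ := hcv
        exact (hAall' (c, y) hy).2
    have hΓA : Γ = A := by
      cases Γ; cases A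
      simp only [PreGraph.mk.injEq]
      exact ⟨hverts.symm, hedges.symm⟩
    rw [hΓA, h]
    exact hAT
  · -- s = w * ι x : the element is (A, 1) · (B, s)
    obtain ⟨x, hwx, rfl⟩ := hws
    obtain ⟨B, hBT, hBV, hBE, hB1, hBs, hBe⟩ := P1 w hw x hwx
    have hmem : (A.union B, w * ι x) ∈ T := by
      have := hm _ hAT _ hBT
      simpa [gmul, PreGraph.trans_one] using this
    have hΓAB : Γ = A.union B := by
      have hv : (A.union B).verts = Γ.verts := by
        apply Set.Subset.antisymm (Set.union_subset hAV hBV)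
        intro v hv
        rcases (hacc v hv).cases_tail with h' | ⟨c, _, hcv⟩
        · rw [h']; exact Set.mem_union_left _ hA1
        · obtain ⟨y, hy, rfl⟩ := hcv
          exact Set.mem_union_left _ (hAall' (c, y) hy).2
      have he : (A.union B).edges = Γ.edges := by
        apply Set.Subset.antisymm (Set.union_subset hAE hBE)
        intro e hE
        exact Set.mem_union_left _ (hAall' e hE).1
      cases Γ
      cases hAB : A.union B
      simp only [PreGraph.mk.injEq]
      rw [hAB] at hv he
      exact ⟨hv.symm, he.symm⟩
    rw [hΓAB]
    exact hmem

/-- `M(S,X)` is generated as a `(·,⁺)`-algebra by the elements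
`(Γ_x, ι x)`, `x ∈ X`, and `M^λ(S,X)` is generated by these together with the
identity element `(Γ_λ, λ)`. -/
theorem stmt_11 {S X : Type*} [Monoid S] (ι : X → S)
    (hgen : Submonoid.closure (Set.range ι) = ⊤) :
    (∀ T : Set (PreGraph S X × S),
      (∀ x, genElt ι x ∈ T) →
      (∀ p ∈ T, ∀ q ∈ T, gmul p q ∈ T) →
      (∀ p ∈ T, gplus p ∈ T) →
      MSem ι ⊆ T) ∧
    (∀ T : Set (PreGraph S X × S),
      (∀ x, genElt ι x ∈ T) →
      ((lambdaGraph S X, (1 : S)) ∈ T) →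
      (∀ p ∈ T, ∀ q ∈ T, gmul p q ∈ T) →
      (∀ p ∈ T, gplus p ∈ T) →
      Mlam ι ⊆ T) := by
  refine ⟨fun T hg hm hp => MSem_key ι T hg hm hp, ?_⟩
  intro T hg h1T hm hp p hpM
  by_cases hpe : p = (lambdaGraph S X, 1)
  · rw [hpe]; exact h1T
  · exact MSem_key ι T hg hm hp ⟨hpM, hpe⟩
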